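/- Let N ≥ 5. Then as k → ∞ with h = h(k) ∈ (0,1), h → 0 and hk → ∞, the sum T_k = Σ_{j=1}^{k} ((1-h²)sin²((j-1)π/k) + h²)^{-(N-2)/2} satisfies T_k · h^{N-3} / k → (2/π) ∫_0^∞ (1+z²)^{-(N-2)/2} dz. -/

import Mathlib

open Real Finset Filter MeasureTheory Set

noncomputable def stmtFa (a p x : ℝ) : ℝ := ((1 - a^2) * Real.sin x ^ 2 + a^2) ^ (-p)

lemma one_sub_sq_pos {a : ℝ} (ha : a ∈ Set.Ioo (0:ℝ) 1) : 0 < 1 - a^2 := by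
  obtain ⟨h0, h1⟩ := ha; nlinarith

lemma stmtFa_base_pos {a : ℝ} (ha : a ∈ Set.Ioo (0:ℝ) 1) (x : ℝ) :
    0 < (1 - a^2) * Real.sin x ^ 2 + a^2 := by
  have h1 := one_sub_sq_pos ha
  have h2 : (0:ℝ) < a^2 := pow_pos ha.1 2
  have h3 : 0 ≤ (1 - a^2) * Real.sin x ^ 2 := mul_nonneg h1.le (sq_nonneg _)
  linarith

lemma stmtFa_base_ge {a : ℝ} (ha : a ∈ Set.Ioo (0:ℝ) 1) (x : ℝ) :
    a^2 ≤ (1 - a^2) * Real.sin x ^ 2 + a^2 := by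
  have h3 : 0 ≤ (1 - a^2) * Real.sin x ^ 2 :=
    mul_nonneg (one_sub_sq_pos ha).le (sq_nonneg _)
  linarith

lemma stmtFa_cont {a : ℝ} (ha : a ∈ Set.Ioo (0:ℝ) 1) (p : ℝ) : Continuous (stmtFa a p) := by
  apply Continuous.rpow_const
  · continuity
  · intro x; exact Or.inl (ne_of_gt (stmtFa_base_pos ha x))

lemma stmtFa_nonneg {a : ℝ} (ha : a ∈ Set.Ioo (0:ℝ) 1) (p x : ℝ) : 0 ≤ stmtFa a p x :=
  Real.rpow_nonneg (stmtFa_base_pos ha x).le _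

lemma stmtFa_le {a p : ℝ} (ha : a ∈ Set.Ioo (0:ℝ) 1) (hp : 0 ≤ p) (x : ℝ) :
    stmtFa a p x ≤ (a^2) ^ (-p) :=
  Real.rpow_le_rpow_of_nonpos (pow_pos ha.1 2) (stmtFa_base_ge ha x) (by linarith)

lemma stmtFa_anti {a p : ℝ} (ha : a ∈ Set.Ioo (0:ℝ) 1) (hp : 0 ≤ p) :
    AntitoneOn (stmtFa a p) (Set.Icc 0 (Real.pi/2)) := by
  intro x hx y hy hxy
  have hsx : Real.sin x ≤ Real.sin y :=
    Real.strictMonoOn_sin.monotoneOn ⟨by linarith [hx.1, Real.pi_pos], hx.2⟩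
      ⟨by linarith [hy.1, Real.pi_pos], hy.2⟩ hxy
  have hsx0 : 0 ≤ Real.sin x := Real.sin_nonneg_of_nonneg_of_le_pi hx.1
    (by linarith [hx.2, Real.pi_pos])
  have h2 : Real.sin x ^ 2 ≤ Real.sin y ^ 2 := by nlinarith
  have h1 := one_sub_sq_pos ha
  apply Real.rpow_le_rpow_of_nonpos (stmtFa_base_pos ha x)
  · nlinarith [mul_le_mul_of_nonneg_left h2 h1.le]
  · linarith

lemma stmtFa_symm (a p x : ℝ) : stmtFa a p (Real.pi - x) = stmtFa a p x := by
  simp [stmtFa, Real.sin_pi_sub]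

lemma stmtFa_mono {a p : ℝ} (ha : a ∈ Set.Ioo (0:ℝ) 1) (hp : 0 ≤ p) :
    MonotoneOn (stmtFa a p) (Set.Icc (Real.pi/2) Real.pi) := by
  intro x hx y hy hxy
  rw [← stmtFa_symm a p x, ← stmtFa_symm a p y]
  apply stmtFa_anti ha hp
  · exact ⟨by linarith [hy.2], by linarith [hy.1]⟩
  · exact ⟨by linarith [hx.2], by linarith [hx.1]⟩
  · linarith



lemma stmt_sum_int {a p : ℝ} (ha : a ∈ Set.Ioo (0:ℝ) 1) (hp : 0 ≤ p) {k : ℕ} (hk : 2 ≤ k) :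
    |(∑ i ∈ Finset.range k, stmtFa a p ((i:ℝ) * (Real.pi/k))) -
      ((k:ℝ)/Real.pi) * ∫ x in (0:ℝ)..Real.pi, stmtFa a p x| ≤ 2 * (a^2) ^ (-p) := by
  have hπ : (0:ℝ) < Real.pi := Real.pi_pos
  have hk0 : (0:ℝ) < k := by positivity
  have hc : (0:ℝ) < Real.pi / k := by positivity
  set G : ℝ → ℝ := fun u => stmtFa a p (u * (Real.pi/k)) with hG
  have hGcont : Continuous G := (stmtFa_cont ha p).comp (by continuity)
  have hGint : ∀ x y : ℝ, IntervalIntegrable G volume x y :=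
    fun x y => hGcont.intervalIntegrable x y
  set B : ℝ := (a^2) ^ (-p) with hB
  have hB0 : 0 ≤ B := Real.rpow_nonneg (sq_nonneg a) _
  have hGle : ∀ u, G u ≤ B := fun u => stmtFa_le ha hp _
  have hGnn : ∀ u, 0 ≤ G u := fun u => stmtFa_nonneg ha p _
  have hGanti : AntitoneOn G (Set.Icc (0:ℝ) ((k:ℝ)/2)) := by
    intro x hx y hy hxy
    apply stmtFa_anti ha hp
    · constructor
      · exact mul_nonneg hx.1 hc.le
      · calc x * (Real.pi/k) ≤ ((k:ℝ)/2) * (Real.pi/k) :=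
              mul_le_mul_of_nonneg_right hx.2 hc.le
          _ = Real.pi/2 := by field_simp
    · constructor
      · exact mul_nonneg hy.1 hc.le
      · calc y * (Real.pi/k) ≤ ((k:ℝ)/2) * (Real.pi/k) :=
              mul_le_mul_of_nonneg_right hy.2 hc.le
          _ = Real.pi/2 := by field_simp
    · exact mul_le_mul_of_nonneg_right hxy hc.le
  have hGmono : MonotoneOn G (Set.Icc ((k:ℝ)/2) (k:ℝ)) := by
    intro x hx y hy hxy
    apply stmtFa_mono ha hp
    · constructor
      · calc Real.pi/2 = ((k:ℝ)/2) * (Real.pi/k) := by field_simp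
          _ ≤ x * (Real.pi/k) := mul_le_mul_of_nonneg_right hx.1 hc.le
      · calc x * (Real.pi/k) ≤ (k:ℝ) * (Real.pi/k) :=
              mul_le_mul_of_nonneg_right hx.2 hc.le
          _ = Real.pi := by field_simp
    · constructor
      · calc Real.pi/2 = ((k:ℝ)/2) * (Real.pi/k) := by field_simp
          _ ≤ y * (Real.pi/k) := mul_le_mul_of_nonneg_right hy.1 hc.le
      · calc y * (Real.pi/k) ≤ (k:ℝ) * (Real.pi/k) :=
              mul_le_mul_of_nonneg_right hy.2 hc.le
          _ = Real.pi := by field_simp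
    · exact mul_le_mul_of_nonneg_right hxy hc.le
  have hI : (∫ u in (0:ℝ)..(k:ℝ), G u) = ((k:ℝ)/Real.pi) * ∫ x in (0:ℝ)..Real.pi, stmtFa a p x := by
    rw [hG]
    rw [intervalIntegral.integral_comp_mul_right (stmtFa a p) (ne_of_gt hc)]
    rw [zero_mul]
    have h1 : (k:ℝ) * (Real.pi/k) = Real.pi := by field_simp
    rw [h1, smul_eq_mul, inv_div]
  set m0 : ℕ := k/2 with hm0
  set m1 : ℕ := (k+1)/2 with hm1
  have hm0k : m0 + 1 ≤ k := by omega
  have hm1k : m1 + 1 ≤ k := by omega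
  have hm0R : (m0:ℝ) ≤ (k:ℝ)/2 := by
    have h' : (2*m0:ℕ) ≤ k := by omega
    have := (Nat.cast_le (α := ℝ)).mpr h'
    push_cast at this; linarith
  have hm1R : (k:ℝ)/2 ≤ (m1:ℝ) := by
    have h' : k ≤ (2*m1:ℕ) := by omega
    have := (Nat.cast_le (α := ℝ)).mpr h'
    push_cast at this; linarith
  have hm1m0R : (m1:ℝ) ≤ (m0:ℝ) + 1 := by
    have h' : m1 ≤ m0 + 1 := by omega
    have := (Nat.cast_le (α := ℝ)).mpr h'
    push_cast at this; linarith
  have hm0m1 : (m0:ℝ) ≤ (m1:ℝ) := by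
    have h' : m0 ≤ m1 := by omega
    exact_mod_cast h'
  have hkR1 : (m1:ℝ) ≤ (k:ℝ) - 1 := by
    have h' : (m1 + 1:ℕ) ≤ k := hm1k
    have := (Nat.cast_le (α := ℝ)).mpr h'
    push_cast at this; linarith
  -- upper bound
  have hup : (∑ i ∈ Finset.range k, G i) ≤ (∫ u in (0:ℝ)..(k:ℝ), G u) + B := by
    have hsplit : (∑ i ∈ Finset.range k, G i)
        = (∑ i ∈ Finset.range (m0+1), G i) + ∑ i ∈ Finset.Ico (m0+1) k, G i := by
      rw [Finset.range_eq_Ico,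
        ← Finset.sum_Ico_consecutive (fun i : ℕ => G i) (Nat.zero_le _) hm0k, ← Finset.range_eq_Ico]
    have h1 : (∑ i ∈ Finset.range (m0+1), G i)
        = (∑ i ∈ Finset.range m0, G ((i+1 : ℕ):ℝ)) + G 0 := by
      have := Finset.sum_range_succ' (fun i : ℕ => G i) m0
      simpa using this
    have h2 : (∑ i ∈ Finset.range m0, G ((i+1 : ℕ):ℝ)) ≤ ∫ u in (0:ℝ)..(m0:ℝ), G u := by
      have h := AntitoneOn.sum_le_integral (x₀ := 0) (a := m0) (f := G)
        (by
          apply hGanti.mono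
          apply Set.Icc_subset_Icc le_rfl
          rw [zero_add]; exact hm0R)
      simpa using h
    have h3 : (∑ i ∈ Finset.Ico (m0+1) k, G i) ≤ ∫ u in ((m0+1:ℕ):ℝ)..((k:ℕ):ℝ), G u := by
      apply MonotoneOn.sum_le_integral_Ico hm0k
      apply hGmono.mono
      apply Set.Icc_subset_Icc _ le_rfl
      push_cast; linarith
    have h4 : (∫ u in (0:ℝ)..(m0:ℝ), G u) + (∫ u in ((m0+1:ℕ):ℝ)..((k:ℕ):ℝ), G u)
        ≤ ∫ u in (0:ℝ)..(k:ℝ), G u := by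
      have e1 : (∫ u in (0:ℝ)..(m0:ℝ), G u) + (∫ u in ((m0:ℕ):ℝ)..((m0+1:ℕ):ℝ), G u)
          = ∫ u in (0:ℝ)..((m0+1:ℕ):ℝ), G u :=
        intervalIntegral.integral_add_adjacent_intervals (hGint _ _) (hGint _ _)
      have e2 : (∫ u in (0:ℝ)..((m0+1:ℕ):ℝ), G u) + (∫ u in ((m0+1:ℕ):ℝ)..((k:ℕ):ℝ), G u)
          = ∫ u in (0:ℝ)..(k:ℝ), G u :=
        intervalIntegral.integral_add_adjacent_intervals (hGint _ _) (hGint _ _)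
      have e3 : 0 ≤ ∫ u in ((m0:ℕ):ℝ)..((m0+1:ℕ):ℝ), G u := by
        apply intervalIntegral.integral_nonneg (by push_cast; linarith)
        intro u _; exact hGnn u
      linarith
    have hG0 : G 0 ≤ B := hGle 0
    calc (∑ i ∈ Finset.range k, G i)
        = ((∑ i ∈ Finset.range m0, G ((i+1 : ℕ):ℝ)) + G 0) + ∑ i ∈ Finset.Ico (m0+1) k, G i := by
          rw [hsplit, h1]
      _ ≤ ((∫ u in (0:ℝ)..(m0:ℝ), G u) + B) + ∫ u in ((m0+1:ℕ):ℝ)..((k:ℕ):ℝ), G u := by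
          apply add_le_add (add_le_add h2 hG0) h3
      _ ≤ (∫ u in (0:ℝ)..(k:ℝ), G u) + B := by linarith
  -- lower bound
  have hlo : (∫ u in (0:ℝ)..(k:ℝ), G u) - 2*B ≤ ∑ i ∈ Finset.range k, G i := by
    have hsplit : (∑ i ∈ Finset.range k, G i)
        = (∑ i ∈ Finset.range m0, G i) + ∑ i ∈ Finset.Ico m0 k, G i := by
      rw [Finset.range_eq_Ico,
        ← Finset.sum_Ico_consecutive (fun i : ℕ => G i) (Nat.zero_le m0) (by omega : m0 ≤ k), ← Finset.range_eq_Ico]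
    have h2 : (∫ u in (0:ℝ)..(m0:ℝ), G u) ≤ ∑ i ∈ Finset.range m0, G i := by
      have h := AntitoneOn.integral_le_sum (x₀ := 0) (a := m0) (f := G)
        (by
          apply hGanti.mono
          apply Set.Icc_subset_Icc le_rfl
          rw [zero_add]; exact hm0R)
      simpa using h
    have h3 : (∫ u in ((m1:ℕ):ℝ)..((k-1:ℕ):ℝ), G u) ≤ ∑ i ∈ Finset.Ico m0 k, G i := by
      have h := MonotoneOn.integral_le_sum_Ico (a := m1) (b := k-1) (f := G) (by omega)
        (by
          apply hGmono.mono
          apply Set.Icc_subset_Icc hm1R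
          have : ((k-1:ℕ):ℝ) = (k:ℝ) - 1 := by
            have : (1:ℕ) ≤ k := by omega
            push_cast [Nat.cast_sub this]; ring
          rw [this]; linarith)
      refine le_trans h ?_
      have e : (∑ i ∈ Finset.Ico m1 (k-1), G ((i+1:ℕ):ℝ)) = ∑ i ∈ Finset.Ico (m1+1) k, G i := by
        have := Finset.sum_Ico_add' (fun i : ℕ => G i) m1 (k-1) 1
        simpa [Nat.sub_add_cancel (by omega : 1 ≤ k)] using this
      rw [e]
      apply Finset.sum_le_sum_of_subset_of_nonneg
      · apply Finset.Ico_subset_Ico (by omega) le_rfl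
      · intro i _ _; exact hGnn i
    have h4 : (∫ u in (0:ℝ)..(k:ℝ), G u)
        ≤ (∫ u in (0:ℝ)..(m0:ℝ), G u) + (∫ u in ((m1:ℕ):ℝ)..((k-1:ℕ):ℝ), G u) + 2*B := by
      have hkm1 : ((k-1:ℕ):ℝ) = (k:ℝ) - 1 := by
        have h1 : (1:ℕ) ≤ k := by omega
        push_cast [Nat.cast_sub h1]; ring
      have e1 : (∫ u in (0:ℝ)..(m0:ℝ), G u) + (∫ u in ((m0:ℕ):ℝ)..((m1:ℕ):ℝ), G u)
          = ∫ u in (0:ℝ)..(m1:ℝ), G u :=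
        intervalIntegral.integral_add_adjacent_intervals (hGint _ _) (hGint _ _)
      have e2 : (∫ u in (0:ℝ)..(m1:ℝ), G u) + (∫ u in ((m1:ℕ):ℝ)..((k-1:ℕ):ℝ), G u)
          = ∫ u in (0:ℝ)..((k-1:ℕ):ℝ), G u :=
        intervalIntegral.integral_add_adjacent_intervals (hGint _ _) (hGint _ _)
      have e3 : (∫ u in (0:ℝ)..((k-1:ℕ):ℝ), G u) + (∫ u in ((k-1:ℕ):ℝ)..((k:ℕ):ℝ), G u)
          = ∫ u in (0:ℝ)..(k:ℝ), G u :=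
        intervalIntegral.integral_add_adjacent_intervals (hGint _ _) (hGint _ _)
      have b1 : (∫ u in ((m0:ℕ):ℝ)..((m1:ℕ):ℝ), G u) ≤ B := by
        calc (∫ u in ((m0:ℕ):ℝ)..((m1:ℕ):ℝ), G u)
            ≤ ∫ _ in ((m0:ℕ):ℝ)..((m1:ℕ):ℝ), B := by
              apply intervalIntegral.integral_mono_on hm0m1 (hGint _ _)
                (intervalIntegrable_const) (fun x _ => hGle x)
          _ = ((m1:ℝ) - m0) * B := by rw [intervalIntegral.integral_const, smul_eq_mul]
          _ ≤ 1 * B := by apply mul_le_mul_of_nonneg_right (by linarith) hB0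
          _ = B := one_mul B
      have b2 : (∫ u in ((k-1:ℕ):ℝ)..((k:ℕ):ℝ), G u) ≤ B := by
        calc (∫ u in ((k-1:ℕ):ℝ)..((k:ℕ):ℝ), G u)
            ≤ ∫ _ in ((k-1:ℕ):ℝ)..((k:ℕ):ℝ), B := by
              apply intervalIntegral.integral_mono_on (by rw [hkm1]; linarith) (hGint _ _)
                (intervalIntegrable_const) (fun x _ => hGle x)
          _ = ((k:ℝ) - ((k-1:ℕ):ℝ)) * B := by rw [intervalIntegral.integral_const, smul_eq_mul]
          _ ≤ 1 * B := by apply mul_le_mul_of_nonneg_right (by rw [hkm1]; linarith) hB0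
          _ = B := one_mul B
      linarith
    linarith [hsplit ▸ (add_le_add h2 h3)]
  rw [← hI]
  rw [abs_le]
  constructor <;> [linarith; linarith]



lemma stmt_int_eq {a p : ℝ} (ha : a ∈ Set.Ioo (0:ℝ) 1) (hp : 1 ≤ p) :
    (∫ x in (0:ℝ)..Real.pi, stmtFa a p x)
      = 2 * (a * (a^2) ^ (-p)) *
        ∫ z in Set.Ioi (0:ℝ), (1+z^2) ^ (-p) * (1+a^2*z^2) ^ (p-1) := by
  have hπ : (0:ℝ) < Real.pi := Real.pi_pos
  have ha0 : (0:ℝ) < a := ha.1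
  have ha0' : a ≠ 0 := ne_of_gt ha0
  -- step 1 : fold [π/2, π] onto [0, π/2]
  have e1 : (∫ x in (Real.pi/2)..Real.pi, stmtFa a p x)
      = ∫ x in (0:ℝ)..(Real.pi/2), stmtFa a p x := by
    have := intervalIntegral.integral_comp_sub_left (a := 0) (b := Real.pi/2)
      (stmtFa a p) Real.pi
    simp_rw [stmtFa_symm] at this
    have h1 : Real.pi - Real.pi/2 = Real.pi/2 := by ring
    have h2 : Real.pi - 0 = Real.pi := by ring
    rw [h1, h2] at this
    exact this.symm
  have e2 : (∫ x in (0:ℝ)..Real.pi, stmtFa a p x)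
      = 2 * ∫ x in (0:ℝ)..(Real.pi/2), stmtFa a p x := by
    have := intervalIntegral.integral_add_adjacent_intervals
      ((stmtFa_cont ha p).intervalIntegrable (μ := volume) 0 (Real.pi/2))
      ((stmtFa_cont ha p).intervalIntegrable (μ := volume) (Real.pi/2) Real.pi)
    rw [← this, e1]; ring
  -- step 2 : interval integral to set integral over Ioo
  have e3 : (∫ x in (0:ℝ)..(Real.pi/2), stmtFa a p x)
      = ∫ x in Set.Ioo (0:ℝ) (Real.pi/2), stmtFa a p x := by
    rw [intervalIntegral.integral_of_le (by linarith), integral_Ioc_eq_integral_Ioo]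
  -- step 3 : image description
  have himg : (fun z => Real.arctan (a*z)) '' (Set.Ioi (0:ℝ)) = Set.Ioo 0 (Real.pi/2) := by
    ext y
    constructor
    · rintro ⟨z, hz, rfl⟩
      refine ⟨?_, Real.arctan_lt_pi_div_two _⟩
      rw [← Real.arctan_zero]
      exact Real.arctan_strictMono (by exact mul_pos ha0 hz)
    · intro hy
      refine ⟨Real.tan y / a, ?_, ?_⟩
      · have := Real.tan_pos_of_pos_of_lt_pi_div_two hy.1 hy.2
        exact div_pos this ha0
      · show Real.arctan (a * (Real.tan y / a)) = y
        rw [mul_div_cancel₀ _ ha0', Real.arctan_tan (by linarith [hy.1]) hy.2]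
  -- step 4 : change of variables
  have hder : ∀ z : ℝ, HasDerivAt (fun z => Real.arctan (a*z)) (a / (1+(a*z)^2)) z := by
    intro z
    have h1 : HasDerivAt (fun z : ℝ => a*z) a z := by
      simpa using (hasDerivAt_id z).const_mul a
    have h2 := Real.hasDerivAt_arctan (a*z)
    have h3 := HasDerivAt.comp z h2 h1
    simpa [div_eq_mul_inv, mul_comm, Function.comp_def] using h3
  have hinj : Set.InjOn (fun z => Real.arctan (a*z)) (Set.Ioi (0:ℝ)) := by
    have hsm : StrictMono (fun z : ℝ => Real.arctan (a*z)) := fun x y hxy =>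
      Real.arctan_strictMono (by nlinarith)
    exact hsm.injective.injOn
  have e4 : (∫ x in Set.Ioo (0:ℝ) (Real.pi/2), stmtFa a p x)
      = ∫ z in Set.Ioi (0:ℝ), |a / (1+(a*z)^2)| • stmtFa a p (Real.arctan (a*z)) := by
    rw [← himg]
    exact MeasureTheory.integral_image_eq_integral_abs_deriv_smul measurableSet_Ioi
      (fun z _ => (hder z).hasDerivWithinAt) hinj (stmtFa a p)
  -- step 5 : simplify the integrand
  have e5 : ∀ z : ℝ, |a / (1+(a*z)^2)| • stmtFa a p (Real.arctan (a*z))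
      = (a * (a^2) ^ (-p)) * ((1+z^2) ^ (-p) * (1+a^2*z^2) ^ (p-1)) := by
    intro z
    have hden : (0:ℝ) < 1 + (a*z)^2 := by positivity
    have hz2 : (0:ℝ) < 1 + z^2 := by positivity
    have haz2 : (0:ℝ) < 1 + a^2*z^2 := by positivity
    have habs : |a / (1+(a*z)^2)| = a / (1+(a*z)^2) := abs_of_pos (by positivity)
    have hsin : Real.sin (Real.arctan (a*z)) ^ 2 = (a*z)^2 / (1+(a*z)^2) := by
      rw [Real.sin_arctan, div_pow, Real.sq_sqrt hden.le]
    have hbase : (1 - a^2) * ((a*z)^2 / (1+(a*z)^2)) + a^2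
        = a^2 * (1+z^2) / (1+a^2*z^2) := by
      field_simp
      ring
    rw [habs, stmtFa, hsin, hbase, smul_eq_mul]
    rw [Real.div_rpow (by positivity) haz2.le, Real.mul_rpow (sq_nonneg a) hz2.le,
      Real.rpow_neg haz2.le p]
    have h6 : (a*z)^2 = a^2*z^2 := by ring
    rw [h6, div_inv_eq_mul, Real.rpow_sub_one (ne_of_gt haz2)]
    field_simp
  simp_rw [e2, e3, e4, e5]
  rw [MeasureTheory.integral_const_mul]
  ring


lemma stmt_dct {p : ℝ} (hp : 1 ≤ p) (h : ℕ → ℝ) (hmem : ∀ k, h k ∈ Set.Ioo (0:ℝ) 1)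
    (hto0 : Filter.Tendsto h Filter.atTop (nhds 0)) :
    Filter.Tendsto
      (fun k => ∫ z in Set.Ioi (0:ℝ), (1+z^2) ^ (-p) * (1+(h k)^2*z^2) ^ (p-1))
      Filter.atTop (nhds (∫ z in Set.Ioi (0:ℝ), (1+z^2) ^ (-p))) := by
  apply MeasureTheory.tendsto_integral_filter_of_dominated_convergence
    (bound := fun z => (1+z^2)⁻¹)
  · -- measurability
    apply Filter.Eventually.of_forall
    intro k
    apply Continuous.aestronglyMeasurable
    apply Continuous.mul
    · exact Continuous.rpow_const (by continuity) (fun z => Or.inl (by positivity))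
    · exact Continuous.rpow_const (by continuity) (fun z => Or.inl (by positivity))
  · -- bound
    apply Filter.Eventually.of_forall
    intro k
    apply Filter.Eventually.of_forall
    intro z
    have hz2 : (0:ℝ) < 1 + z^2 := by positivity
    have hhz : (0:ℝ) < 1 + (h k)^2*z^2 := by
      have := (hmem k).1; positivity
    have hF : (0:ℝ) ≤ (1+z^2) ^ (-p) * (1+(h k)^2*z^2) ^ (p-1) :=
      mul_nonneg (Real.rpow_nonneg hz2.le _) (Real.rpow_nonneg hhz.le _)
    rw [Real.norm_of_nonneg hF]
    have hle : (1+(h k)^2*z^2) ^ (p-1) ≤ (1+z^2) ^ (p-1) := by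
      apply Real.rpow_le_rpow hhz.le _ (by linarith)
      have h1 : (h k)^2 ≤ 1 := by
        have := (hmem k).1; have := (hmem k).2; nlinarith
      nlinarith [sq_nonneg z]
    calc (1+z^2) ^ (-p) * (1+(h k)^2*z^2) ^ (p-1)
        ≤ (1+z^2) ^ (-p) * (1+z^2) ^ (p-1) :=
          mul_le_mul_of_nonneg_left hle (Real.rpow_nonneg hz2.le _)
      _ = (1+z^2)⁻¹ := by
          rw [← Real.rpow_add hz2]
          have : -p + (p-1) = -1 := by ring
          rw [this, Real.rpow_neg_one]
  · -- bound integrable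
    exact integrable_inv_one_add_sq.restrict
  · -- pointwise convergence
    apply Filter.Eventually.of_forall
    intro z
    have hcont : Continuous (fun t : ℝ => (1+t^2*z^2) ^ (p-1)) :=
      Continuous.rpow_const (by continuity) (fun t => Or.inl (by positivity))
    have h1 : Filter.Tendsto (fun k => (1+(h k)^2*z^2) ^ (p-1)) Filter.atTop
        (nhds ((1+(0:ℝ)^2*z^2) ^ (p-1))) := (hcont.tendsto 0).comp hto0
    have h2 : ((1:ℝ)+(0:ℝ)^2*z^2) ^ (p-1) = 1 := by norm_num
    rw [h2] at h1
    have := h1.const_mul ((1+z^2) ^ (-p))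
    simpa using this


/-- Asymptotics of the top–bottom interaction sum: `T_k h^{N-3}/k → (2/π)∫_0^∞(1+z²)^{-(N-2)/2}dz`. -/
theorem stmt_17 (N : ℕ) (hN : 5 ≤ N) (h : ℕ → ℝ)
    (hmem : ∀ k, h k ∈ Set.Ioo (0:ℝ) 1)
    (hto0 : Filter.Tendsto h Filter.atTop (nhds 0))
    (hkinf : Filter.Tendsto (fun k : ℕ => h k * k) Filter.atTop Filter.atTop) :
    Filter.Tendsto
      (fun k : ℕ =>
        (∑ j ∈ Finset.Icc 1 k,
            ((1-(h k)^2) * Real.sin (((j:ℝ)-1)*Real.pi/k)^2 + (h k)^2) ^ (-(((N:ℝ)-2)/2)))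
          * (h k)^(N-3) / (k:ℝ))
      Filter.atTop
      (nhds ((2/Real.pi) * ∫ z in Set.Ioi (0:ℝ), (1+z^2) ^ (-(((N:ℝ)-2)/2)))) := by
  have hπ : (0:ℝ) < Real.pi := Real.pi_pos
  set p : ℝ := ((N:ℝ)-2)/2 with hpdef
  have hN5 : (5:ℝ) ≤ (N:ℝ) := by exact_mod_cast hN
  have hp1 : 1 ≤ p := by rw [hpdef]; linarith
  have hp0 : 0 ≤ p := by linarith
  set L : ℝ := ∫ z in Set.Ioi (0:ℝ), (1+z^2) ^ (-p) with hL
  set A : ℕ → ℝ := fun k =>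
    (2/Real.pi) * ∫ z in Set.Ioi (0:ℝ), (1+z^2) ^ (-p) * (1+(h k)^2*z^2) ^ (p-1) with hA
  set f : ℕ → ℝ := fun k : ℕ =>
        (∑ j ∈ Finset.Icc 1 k,
            ((1-(h k)^2) * Real.sin (((j:ℝ)-1)*Real.pi/k)^2 + (h k)^2) ^ (-p))
          * (h k)^(N-3) / (k:ℝ) with hf
  have hAtend : Filter.Tendsto A Filter.atTop (nhds ((2/Real.pi) * L)) :=
    (stmt_dct hp1 h hmem hto0).const_mul _
  have hkey : ∀ k : ℕ, 2 ≤ k → |f k - A k| ≤ 2 / (h k * k) := by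
    intro k hk2
    have ha : h k ∈ Set.Ioo (0:ℝ) 1 := hmem k
    have ha0 : 0 < h k := ha.1
    have hk0 : (0:ℝ) < k := by
      have : (0:ℕ) < k := by omega
      exact_mod_cast this
    have hkne : (k:ℝ) ≠ 0 := ne_of_gt hk0
    have hc1 : ((N-3:ℕ):ℝ) = (N:ℝ) - 3 := by
      have h3 : (3:ℕ) ≤ N := by omega
      push_cast [Nat.cast_sub h3]; ring
    have hrp : ((h k)^2 : ℝ) ^ (-p) = (h k) ^ (-((N:ℝ)-2)) := by
      rw [← Real.rpow_natCast (h k) 2, ← Real.rpow_mul ha0.le]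
      congr 1
      rw [hpdef]; push_cast; ring
    have hpow : ((h k) ^ (N-3) : ℝ) = (h k) ^ ((N:ℝ)-3) := by
      rw [← Real.rpow_natCast (h k) (N-3), hc1]
    have hone : (h k) ^ (N-3) * ((h k) * ((h k)^2) ^ (-p)) = 1 := by
      rw [hpow, hrp]
      have e1 : (h k) ^ ((N:ℝ)-3) * ((h k) * (h k) ^ (-((N:ℝ)-2)))
          = (h k) ^ (((N:ℝ)-3) + (1 + (-((N:ℝ)-2)))) := by
        rw [Real.rpow_add ha0, Real.rpow_add ha0, Real.rpow_one]
      rw [e1, show ((N:ℝ)-3) + (1 + (-((N:ℝ)-2))) = 0 by ring, Real.rpow_zero]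
    have hinv : ((h k)^2 : ℝ) ^ (-p) * (h k) ^ (N-3) = (h k)⁻¹ := by
      rw [hrp, hpow, ← Real.rpow_add ha0,
        show -((N:ℝ)-2) + ((N:ℝ)-3) = -1 by ring, Real.rpow_neg_one]
    have hsum : (∑ j ∈ Finset.Icc 1 k,
          ((1-(h k)^2) * Real.sin (((j:ℝ)-1)*Real.pi/k)^2 + (h k)^2) ^ (-p))
        = ∑ i ∈ Finset.range k, stmtFa (h k) p ((i:ℝ) * (Real.pi/k)) := by
      rw [← Finset.Ico_add_one_right_eq_Icc, Finset.sum_Ico_eq_sum_range]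
      apply Finset.sum_congr rfl
      intro i _
      simp only [stmtFa]
      congr 3
      push_cast
      ring
    set S : ℝ := ∑ i ∈ Finset.range k, stmtFa (h k) p ((i:ℝ) * (Real.pi/k)) with hS
    set I : ℝ := ∫ x in (0:ℝ)..Real.pi, stmtFa (h k) p x with hI
    have hSI : |S - ((k:ℝ)/Real.pi) * I| ≤ 2 * ((h k)^2) ^ (-p) := stmt_sum_int ha hp0 hk2
    have hIJ : I = 2 * ((h k) * ((h k)^2) ^ (-p)) *
        ∫ z in Set.Ioi (0:ℝ), (1+z^2) ^ (-p) * (1+(h k)^2*z^2) ^ (p-1) := stmt_int_eq ha hp1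
    set Jk : ℝ := ∫ z in Set.Ioi (0:ℝ), (1+z^2) ^ (-p) * (1+(h k)^2*z^2) ^ (p-1) with hJk
    have hfk : f k = S * (h k)^(N-3) / k := by
      simp only [hf]
      rw [hsum]
    have hAk : A k = (((k:ℝ)/Real.pi) * I) * (h k)^(N-3) / k := by
      show (2/Real.pi) * Jk = (((k:ℝ)/Real.pi) * I) * (h k)^(N-3) / k
      rw [hIJ]
      have e : (((k:ℝ)/Real.pi) * (2 * ((h k) * ((h k)^2) ^ (-p)) * Jk)) * (h k)^(N-3) / k
          = (2/Real.pi) * Jk * ((h k) ^ (N-3) * ((h k) * ((h k)^2) ^ (-p))) * ((k:ℝ)/k) := by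
        ring
      rw [e, hone, div_self hkne, mul_one, mul_one]
    have hd : f k - A k = (S - ((k:ℝ)/Real.pi) * I) * (h k)^(N-3) / k := by
      rw [hfk, hAk]; ring
    have habs : |f k - A k| = |S - ((k:ℝ)/Real.pi) * I| * (h k)^(N-3) / k := by
      rw [hd, abs_div, abs_mul, abs_of_pos hk0, abs_of_nonneg (pow_nonneg ha0.le _)]
    rw [habs]
    have hstep : |S - ((k:ℝ)/Real.pi) * I| * (h k)^(N-3) / k
        ≤ (2 * ((h k)^2) ^ (-p)) * (h k)^(N-3) / k := by
      gcongr
    refine le_trans hstep (le_of_eq ?_)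
    rw [mul_assoc, hinv]
    field_simp
  have hdiff : Filter.Tendsto (fun k => f k - A k) Filter.atTop (nhds 0) := by
    apply squeeze_zero_norm' (Filter.eventually_atTop.mpr ⟨2, fun k hk => hkey k hk⟩)
    have h1 : Filter.Tendsto (fun k : ℕ => (h k * k)⁻¹) Filter.atTop (nhds 0) :=
      hkinf.inv_tendsto_atTop
    have h2 := h1.const_mul (2:ℝ)
    simpa [div_eq_mul_inv, mul_comm] using h2
  have hfinal := hAtend.add hdiff
  rw [add_zero] at hfinal
  exact hfinal.congr (fun k => by ring)
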